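/- Let g be a nonnegative multiplicative function with g(p^j) ≤ j+1 for all prime powers. There exists an absolute constant C such that for all real x, z ≥ 2, ∑_{n ≤ x, n z-smooth} g(n)/n ≫ exp(∑_{p ≤ z} g(p)/p) · (1 − C·exp(−log x / log z)). -/

import Mathlib

open scoped Classical

-- L1: multiplicativity on sets of primes
theorem aux_g_prod (g : ℕ → ℝ) (hg1 : g 1 = 1)
    (hmul : ∀ m n : ℕ, Nat.Coprime m n → g (m * n) = g m * g n) :
    ∀ A : Finset ℕ, (∀ p ∈ A, p.Prime) → g (∏ p ∈ A, p) = ∏ p ∈ A, g p := by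
  intro A
  induction A using Finset.induction_on with
  | empty => simpa using hg1
  | insert a s ha ih =>
    intro hA
    have hap : a.Prime := hA a (Finset.mem_insert_self a s)
    have hs : ∀ p ∈ s, p.Prime := fun p hp => hA p (Finset.mem_insert_of_mem hp)
    have hcop : Nat.Coprime a (∏ p ∈ s, p) := by
      refine Nat.Coprime.prod_right fun p hp => ?_
      exact (Nat.coprime_primes hap (hs p hp)).mpr (fun h => ha (h ▸ hp))
    rw [Finset.prod_insert ha, Finset.prod_insert ha, hmul _ _ hcop, ih hs]

-- L2: prime divides product of primes iff member
theorem aux_dvd_prod_iff {A : Finset ℕ} (hA : ∀ p ∈ A, p.Prime) {q : ℕ} (hq : q.Prime) :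
    q ∣ ∏ p ∈ A, p ↔ q ∈ A := by
  constructor
  · intro h
    obtain ⟨a, ha, hqa⟩ := hq.prime.exists_mem_finset_dvd h
    rwa [(Nat.prime_dvd_prime_iff_eq hq (hA a ha)).mp hqa]
  · intro h
    exact Finset.dvd_prod_of_mem _ h

-- L3: sum of 1/n^2
theorem aux_sum_sq (m : ℕ) : ∑ n ∈ Finset.Icc 2 m, (1:ℝ) / (n:ℝ)^2 ≤ 1 := by
  have h : ∀ m : ℕ, 2 ≤ m → ∑ n ∈ Finset.Icc 2 m, (1:ℝ) / (n:ℝ)^2 ≤ 1 - 1 / m := by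
    intro m hm
    induction m with
    | zero => omega
    | succ k ih =>
      rcases Nat.lt_or_ge k 2 with hk | hk
      · interval_cases k
        · omega
        · norm_num
      · rw [Finset.sum_Icc_succ_top (by omega)]
        have h1 : ((k:ℝ)+1)^2 > 0 := by positivity
        have hk0 : (0:ℝ) < k := by exact_mod_cast by omega
        have : (1:ℝ) / ((k:ℝ)+1)^2 ≤ 1/(k:ℝ) - 1/((k:ℝ)+1) := by
          rw [div_sub_div _ _ (ne_of_gt hk0) (by positivity)]
          rw [div_le_div_iff₀ h1 (by positivity)]
          ring_nf
          nlinarith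
        push_cast
        have := ih hk
        linarith
  rcases Nat.lt_or_ge m 2 with hm | hm
  · rw [Finset.Icc_eq_empty (by omega)]; simp
  · have := h m hm
    have : (0:ℝ) < 1 / m := by positivity
    linarith [h m hm]

-- L5: exp convexity bound
theorem aux_exp_le (u : ℝ) (h0 : 0 ≤ u) (h1 : u ≤ 1) :
    Real.exp u ≤ 1 + (Real.exp 1 - 1) * u := by
  have := convexOn_exp.2 (Set.mem_univ (0:ℝ)) (Set.mem_univ 1) (by linarith : (0:ℝ) ≤ 1 - u) h0 (by ring)
  simp only [smul_eq_mul, mul_zero, mul_one, zero_add, Real.exp_zero] at this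
  calc Real.exp u ≤ 1 - u + u * Real.exp 1 := this
    _ = 1 + (Real.exp 1 - 1) * u := by ring

-- L6: 1+u >= exp(u - u^2)
theorem aux_one_add_ge (u : ℝ) (h0 : 0 ≤ u) : Real.exp (u - u^2) ≤ 1 + u := by
  have h1 : (0:ℝ) < 1 + u := by linarith
  have hv : u - u^2 ≤ u / (1 + u) := by
    rw [le_div_iff₀ h1]; nlinarith
  have h2 : Real.exp (u / (1+u)) ≤ 1 + u := by
    have h3 : 1 - u/(1+u) ≤ Real.exp (-(u/(1+u))) := by
      have := Real.add_one_le_exp (-(u/(1+u))); linarith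
    have h4 : 1 - u/(1+u) = 1/(1+u) := by field_simp; ring
    rw [h4, Real.exp_neg, one_div, inv_le_inv₀ (by positivity) (Real.exp_pos _)] at h3
    exact h3
  exact le_trans (Real.exp_le_exp.mpr hv) h2

theorem aux_theta (N : ℕ) :
    ∑ p ∈ (Finset.range N).filter Nat.Prime, Real.log p ≤ N * Real.log 4 := by
  rcases Nat.eq_zero_or_pos N with h0 | hN
  · subst h0; simp [Real.log_nonneg, Finset.range_zero]
  have h1 : ∑ p ∈ (Finset.range N).filter Nat.Prime, Real.log p
      = Real.log (∏ p ∈ (Finset.range N).filter Nat.Prime, (p:ℝ)) := by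
    rw [Real.log_prod]
    intro p hp
    exact_mod_cast (Nat.Prime.pos (Finset.mem_filter.mp hp).2).ne'
  rw [h1]
  have h2 : (∏ p ∈ (Finset.range N).filter Nat.Prime, (p:ℝ)) = ((primorial (N-1) : ℕ) : ℝ) := by
    have hN' : N - 1 + 1 = N := Nat.succ_pred_eq_of_pos hN
    rw [primorial, hN', Nat.cast_prod]
  rw [h2]
  have h3 : (primorial (N-1) : ℝ) ≤ ((4:ℝ))^(N-1) := by
    exact_mod_cast primorial_le_4_pow (N-1)
  calc Real.log (primorial (N-1)) ≤ Real.log ((4:ℝ)^(N-1)) := by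
        apply Real.log_le_log (by exact_mod_cast primorial_pos (N-1)) h3
    _ = ((N-1 : ℕ):ℝ) * Real.log 4 := by rw [Real.log_pow]
    _ ≤ N * Real.log 4 := by
        have h5 : (0:ℝ) ≤ Real.log 4 := Real.log_nonneg (by norm_num)
        have h6 : ((N-1:ℕ):ℝ) ≤ (N:ℝ) := by exact_mod_cast Nat.sub_le N 1
        nlinarith

theorem aux_mertens (m : ℕ) :
    ∑ p ∈ (Finset.Iic m).filter Nat.Prime, Real.log p / p ≤ 3 * (Nat.log 2 m + 1) := by
  set P := (Finset.Iic m).filter Nat.Prime with hP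
  have hmaps : ∀ p ∈ P, Nat.log 2 p ∈ Finset.range (Nat.log 2 m + 1) := by
    intro p hp
    simp only [Finset.mem_range, Nat.lt_succ_iff]
    exact Nat.log_mono_right (Finset.mem_Iic.mp (Finset.mem_filter.mp hp).1)
  rw [← Finset.sum_fiberwise_of_maps_to hmaps (fun p => Real.log p / p)]
  have hfib : ∀ k ∈ Finset.range (Nat.log 2 m + 1),
      ∑ p ∈ P.filter (fun p => Nat.log 2 p = k), Real.log p / p ≤ 3 := by
    intro k _
    have hsub : P.filter (fun p => Nat.log 2 p = k) ⊆ (Finset.range (2^(k+1))).filter Nat.Prime := by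
      intro p hp
      obtain ⟨hp1, hp2⟩ := Finset.mem_filter.mp hp
      obtain ⟨_, hpp⟩ := Finset.mem_filter.mp hp1
      refine Finset.mem_filter.mpr ⟨Finset.mem_range.mpr ?_, hpp⟩
      have := Nat.lt_pow_succ_log_self (by norm_num : 1 < 2) p
      rwa [hp2] at this
    have hterm : ∀ p ∈ P.filter (fun p => Nat.log 2 p = k), Real.log p / p ≤ Real.log p / 2^k := by
      intro p hp
      obtain ⟨hp1, hp2⟩ := Finset.mem_filter.mp hp
      obtain ⟨_, hpp⟩ := Finset.mem_filter.mp hp1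
      have hlow : (2:ℝ)^k ≤ p := by
        have := Nat.pow_log_le_self 2 hpp.pos.ne'
        rw [hp2] at this
        exact_mod_cast this
      exact div_le_div_of_nonneg_left (Real.log_natCast_nonneg p) (by positivity) hlow
    calc ∑ p ∈ P.filter (fun p => Nat.log 2 p = k), Real.log p / p
        ≤ ∑ p ∈ P.filter (fun p => Nat.log 2 p = k), Real.log p / 2^k :=
          Finset.sum_le_sum hterm
      _ = (∑ p ∈ P.filter (fun p => Nat.log 2 p = k), Real.log p) / 2^k :=
          (Finset.sum_div _ _ _).symm
      _ ≤ (∑ p ∈ (Finset.range (2^(k+1))).filter Nat.Prime, Real.log p) / 2^k := by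
          apply div_le_div_of_nonneg_right ?_ (by positivity)
          exact Finset.sum_le_sum_of_subset_of_nonneg hsub
            (fun p _ _ => Real.log_natCast_nonneg p)
      _ ≤ (((2^(k+1):ℕ):ℝ) * Real.log 4) / 2^k := by
          apply div_le_div_of_nonneg_right (aux_theta (2^(k+1))) (by positivity)
      _ = 2 * Real.log 4 := by
          push_cast
          rw [pow_succ]
          field_simp
      _ ≤ 3 := by
          have h4 : Real.log 4 = 2 * Real.log 2 := by
            rw [show (4:ℝ) = 2^2 by norm_num, Real.log_pow]; push_cast; ring
          nlinarith [Real.log_two_lt_d9]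
  calc ∑ k ∈ Finset.range (Nat.log 2 m + 1), ∑ p ∈ P.filter (fun p => Nat.log 2 p = k), Real.log p / p
      ≤ ∑ k ∈ Finset.range (Nat.log 2 m + 1), (3:ℝ) := Finset.sum_le_sum hfib
    _ = 3 * (Nat.log 2 m + 1) := by simp [mul_comm]

set_option maxHeartbeats 1000000 in
theorem smooth_sum_lower_bound_exp :
    ∃ c : ℝ, 0 < c ∧ ∃ C : ℝ, 0 < C ∧
      ∀ g : ℕ → ℝ, g 1 = 1 → (∀ m n : ℕ, Nat.Coprime m n → g (m * n) = g m * g n) →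
        (∀ n : ℕ, 0 ≤ g n) → (∀ p j : ℕ, p.Prime → 1 ≤ j → g (p ^ j) ≤ j + 1) →
        ∀ x z : ℝ, 2 ≤ x → 2 ≤ z →
          ∑ n ∈ (Finset.Icc 1 ⌊x⌋₊).filter
              (fun n => ∀ p : ℕ, p.Prime → p ∣ n → (p : ℝ) ≤ z), g n / n ≥
            c * Real.exp (∑ p ∈ (Finset.Iic ⌊z⌋₊).filter Nat.Prime, g p / p) *
              (1 - C * Real.exp (-(Real.log x / Real.log z))) := by
  refine ⟨Real.exp (-4), Real.exp_pos _, Real.exp 52, Real.exp_pos _, ?_⟩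
  intro g hg1 hmul hgnn hgpj x z hx hz
  have hx0 : (0:ℝ) < x := by linarith
  have hz0 : (0:ℝ) < z := by linarith
  have hlz : 0 < Real.log z := Real.log_pos (by linarith)
  set m := ⌊z⌋₊ with hm
  set P := (Finset.Iic m).filter Nat.Prime with hPdef
  have hPp : ∀ p ∈ P, p.Prime := fun p hp => (Finset.mem_filter.mp hp).2
  have hPle : ∀ p ∈ P, (p:ℝ) ≤ z := by
    intro p hp
    have h1 : p ≤ m := Finset.mem_Iic.mp (Finset.mem_filter.mp hp).1
    calc (p:ℝ) ≤ (m:ℝ) := by exact_mod_cast h1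
      _ ≤ z := Nat.floor_le hz0.le
  set ε : ℝ := 1 / Real.log z with hε
  have hε0 : 0 < ε := by positivity
  set u : ℕ → ℝ := fun p => g p / p with hu
  set w : ℕ → ℝ := fun p => g p / p * (p:ℝ) ^ ε with hw
  have hppos : ∀ p ∈ P, (0:ℝ) < p := by
    intro p hp; exact_mod_cast (hPp p hp).pos
  have hu_nn : ∀ p ∈ P, 0 ≤ u p := by
    intro p hp; exact div_nonneg (hgnn p) (hppos p hp).le
  have hw_nn : ∀ p ∈ P, 0 ≤ w p := by
    intro p hp
    exact mul_nonneg (hu_nn p hp) (Real.rpow_nonneg (hppos p hp).le ε)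
  have hg2 : ∀ p ∈ P, g p ≤ 2 := by
    intro p hp
    have := hgpj p 1 (hPp p hp) le_rfl
    rw [pow_one] at this
    norm_num at this
    linarith
  have hu2 : ∀ p ∈ P, u p ≤ 2 / p := by
    intro p hp
    have h := hg2 p hp
    have hp0 := hppos p hp
    show g p / p ≤ 2 / p
    gcongr
  -- product identities
  have hBu : ∑ A ∈ P.powerset, ∏ p ∈ A, u p = ∏ p ∈ P, (1 + u p) := by
    have h := Finset.prod_add u (fun _ => (1:ℝ)) P
    simp only [Finset.prod_const_one, mul_one] at h
    rw [← h]
    exact Finset.prod_congr rfl (fun p _ => by ring)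
  have hBw : ∑ A ∈ P.powerset, ∏ p ∈ A, w p = ∏ p ∈ P, (1 + w p) := by
    have h := Finset.prod_add w (fun _ => (1:ℝ)) P
    simp only [Finset.prod_const_one, mul_one] at h
    rw [← h]
    exact Finset.prod_congr rfl (fun p _ => by ring)
  set S : ℝ := ∑ p ∈ P, g p / p with hS
  -- lower bound for prod (1+u)
  have hsumsq : ∑ p ∈ P, (u p)^2 ≤ 4 := by
    have h1 : ∀ p ∈ P, (u p)^2 ≤ 4 * ((1:ℝ)/(p:ℝ)^2) := by
      intro p hp
      have h2 := hu2 p hp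
      have h3 := hu_nn p hp
      have h4 := hppos p hp
      have : (u p)^2 ≤ (2/(p:ℝ))^2 := by nlinarith
      calc (u p)^2 ≤ (2/(p:ℝ))^2 := this
        _ = 4 * ((1:ℝ)/(p:ℝ)^2) := by rw [div_pow, one_div, div_eq_mul_inv]; norm_num
    calc ∑ p ∈ P, (u p)^2 ≤ ∑ p ∈ P, 4 * ((1:ℝ)/(p:ℝ)^2) := Finset.sum_le_sum h1
      _ = 4 * ∑ p ∈ P, (1:ℝ)/(p:ℝ)^2 := by rw [Finset.mul_sum]
      _ ≤ 4 * ∑ n ∈ Finset.Icc 2 m, (1:ℝ)/(n:ℝ)^2 := by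
          have hsub : P ⊆ Finset.Icc 2 m := by
            intro p hp
            exact Finset.mem_Icc.mpr ⟨(hPp p hp).two_le, Finset.mem_Iic.mp (Finset.mem_filter.mp hp).1⟩
          have := Finset.sum_le_sum_of_subset_of_nonneg hsub
            (fun n _ _ => by positivity : ∀ n ∈ Finset.Icc 2 m, n ∉ P → (0:ℝ) ≤ 1/(n:ℝ)^2)
          linarith
      _ ≤ 4 * 1 := by nlinarith [aux_sum_sq m]
      _ = 4 := by ring
  have hD : Real.exp (S - 4) ≤ ∏ p ∈ P, (1 + u p) := by
    calc Real.exp (S - 4) ≤ Real.exp (∑ p ∈ P, (u p - (u p)^2)) := by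
          apply Real.exp_le_exp.mpr
          rw [Finset.sum_sub_distrib]
          have : S = ∑ p ∈ P, u p := rfl
          linarith [hsumsq]
      _ = ∏ p ∈ P, Real.exp (u p - (u p)^2) := by rw [Real.exp_sum]
      _ ≤ ∏ p ∈ P, (1 + u p) := by
          apply Finset.prod_le_prod (fun p _ => (Real.exp_pos _).le)
          intro p hp
          exact aux_one_add_ge (u p) (hu_nn p hp)
  -- upper bound for prod (1+w)
  have hwub : ∀ p ∈ P, w p ≤ u p + 4 * ε * (Real.log p / p) := by
    intro p hp
    have hp0 := hppos p hp
    have hlp : 0 ≤ Real.log p := Real.log_natCast_nonneg p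
    have hεlp : ε * Real.log p ≤ 1 := by
      have h1 : Real.log p ≤ Real.log z := Real.log_le_log hp0 (hPle p hp)
      rw [hε]
      rw [div_mul_eq_mul_div, mul_comm]
      rw [div_le_one hlz]
      linarith
    have hrw : (p:ℝ) ^ ε = Real.exp (ε * Real.log p) := by
      rw [Real.rpow_def_of_pos hp0, mul_comm]
    have hexp : (p:ℝ) ^ ε ≤ 1 + (Real.exp 1 - 1) * (ε * Real.log p) := by
      rw [hrw]
      exact aux_exp_le _ (by positivity) hεlp
    have he1 : Real.exp 1 - 1 ≤ 2 := by nlinarith [Real.exp_one_lt_d9]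
    have hupe : u p * ((p:ℝ)^ε - 1) ≤ (2/p) * (2 * (ε * Real.log p)) := by
      apply mul_le_mul (hu2 p hp) ?_ ?_ (by positivity)
      · nlinarith [hexp, he1, mul_nonneg (sub_nonneg.mpr he1) (mul_nonneg hε0.le hlp)]
      · have : (1:ℝ) ≤ (p:ℝ)^ε := by
          calc (1:ℝ) = (p:ℝ)^(0:ℝ) := by rw [Real.rpow_zero]
            _ ≤ (p:ℝ)^ε := Real.rpow_le_rpow_of_exponent_le
                (by exact_mod_cast (hPp p hp).one_lt.le) hε0.le
        linarith
    have : w p = u p + u p * ((p:ℝ)^ε - 1) := by rw [hw, hu]; ring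
    rw [this]
    have h2 : (2/(p:ℝ)) * (2 * (ε * Real.log p)) = 4 * ε * (Real.log p / p) := by
      field_simp; ring
    linarith [hupe, h2 ▸ hupe]
  have hmert : ∑ p ∈ P, Real.log p / p ≤ 12 * Real.log z := by
    have h1 := aux_mertens m
    have hm1 : m ≠ 0 := by
      have : 2 ≤ m := Nat.le_floor (by exact_mod_cast hz)
      omega
    have h2 : (Nat.log 2 m : ℝ) * Real.log 2 ≤ Real.log z := by
      have h3 : (2:ℝ)^(Nat.log 2 m) ≤ m := by exact_mod_cast Nat.pow_log_le_self 2 hm1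
      have h4 : (m:ℝ) ≤ z := Nat.floor_le hz0.le
      have h5 : Real.log ((2:ℝ)^(Nat.log 2 m)) ≤ Real.log z := by
        apply Real.log_le_log (by positivity)
        linarith
      rwa [Real.log_pow] at h5
    have hl2 : (0.6931471803 : ℝ) < Real.log 2 := Real.log_two_gt_d9
    have h6 : (Nat.log 2 m : ℝ) ≤ 2 * Real.log z := by
      have hn : (0:ℝ) ≤ (Nat.log 2 m : ℝ) := Nat.cast_nonneg _
      nlinarith
    have h7 : Real.log 2 ≤ Real.log z := Real.log_le_log (by norm_num) (by linarith)
    have h8 : (1:ℝ) ≤ 2 * Real.log z := by nlinarith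
    calc ∑ p ∈ P, Real.log p / p ≤ 3 * ((Nat.log 2 m : ℝ) + 1) := h1
      _ ≤ 3 * (2 * Real.log z + 2 * Real.log z) := by linarith
      _ = 12 * Real.log z := by ring
  have hE : ∏ p ∈ P, (1 + w p) ≤ Real.exp (S + 48) := by
    calc ∏ p ∈ P, (1 + w p) ≤ ∏ p ∈ P, Real.exp (w p) := by
          apply Finset.prod_le_prod
          · intro p hp; have := hw_nn p hp; linarith
          · intro p hp
            have := Real.add_one_le_exp (w p)
            linarith
      _ = Real.exp (∑ p ∈ P, w p) := (Real.exp_sum _ _).symm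
      _ ≤ Real.exp (S + 48) := by
          apply Real.exp_le_exp.mpr
          have h1 : ∑ p ∈ P, w p ≤ ∑ p ∈ P, (u p + 4 * ε * (Real.log p / p)) :=
            Finset.sum_le_sum hwub
          rw [Finset.sum_add_distrib] at h1
          have h2 : ∑ p ∈ P, 4 * ε * (Real.log p / p) = 4 * ε * ∑ p ∈ P, Real.log p / p := by
            rw [Finset.mul_sum]
          have h3 : 4 * ε * ∑ p ∈ P, Real.log p / p ≤ 4 * ε * (12 * Real.log z) := by
            apply mul_le_mul_of_nonneg_left hmert (by positivity)
          have h4 : 4 * ε * (12 * Real.log z) = 48 := by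
            rw [hε]; field_simp; ring
          have h5 : S = ∑ p ∈ P, u p := rfl
          linarith [h1, h2 ▸ h1]
  -- now the combinatorial part
  set t : ℝ := Real.log x / Real.log z with ht
  have hxε : Real.exp (-t) = x ^ (-ε) := by
    rw [Real.rpow_def_of_pos hx0, ht, hε]
    congr 1
    field_simp
  set i : Finset ℕ → ℕ := fun A => ∏ p ∈ A, p with hi
  have hiprime : ∀ A ∈ P.powerset, ∀ q : ℕ, q.Prime → (q ∣ i A ↔ q ∈ A) := by
    intro A hA q hq
    exact aux_dvd_prod_iff (fun p hp => hPp p (Finset.mem_powerset.mp hA hp)) hq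
  have hival : ∀ A ∈ P.powerset, g (i A) / (i A : ℝ) = ∏ p ∈ A, u p := by
    intro A hA
    have hAp : ∀ p ∈ A, p.Prime := fun p hp => hPp p (Finset.mem_powerset.mp hA hp)
    rw [hi]
    simp only
    rw [aux_g_prod g hg1 hmul A hAp, Nat.cast_prod, ← Finset.prod_div_distrib]
  have hipos : ∀ A ∈ P.powerset, 0 < i A := by
    intro A hA
    exact Finset.prod_pos (fun p hp => (hPp p (Finset.mem_powerset.mp hA hp)).pos)
  have hinj : ∀ A ∈ P.powerset, ∀ B ∈ P.powerset, i A = i B → A = B := by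
    intro A hA B hB hAB
    ext q
    constructor
    · intro hqA
      have hq := hPp q (Finset.mem_powerset.mp hA hqA)
      have hd : q ∣ i A := (hiprime A hA q hq).mpr hqA
      rw [hAB] at hd
      exact (hiprime B hB q hq).mp hd
    · intro hqB
      have hq := hPp q (Finset.mem_powerset.mp hB hqB)
      have hd : q ∣ i B := (hiprime B hB q hq).mpr hqB
      rw [← hAB] at hd
      exact (hiprime A hA q hq).mp hd
  set T := (Finset.Icc 1 ⌊x⌋₊).filter (fun n => ∀ p : ℕ, p.Prime → p ∣ n → (p : ℝ) ≤ z) with hT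
  set Ple := P.powerset.filter (fun A => i A ≤ ⌊x⌋₊) with hPle'
  set Pgt := P.powerset.filter (fun A => ¬ i A ≤ ⌊x⌋₊) with hPgt
  have hA1 : ∑ A ∈ Ple, ∏ p ∈ A, u p ≤ ∑ n ∈ T, g n / n := by
    have hinj' : ∀ A ∈ Ple, ∀ B ∈ Ple, i A = i B → A = B := by
      intro A hA B hB
      exact hinj A (Finset.filter_subset _ _ hA) B (Finset.filter_subset _ _ hB)
    have hstep : ∑ A ∈ Ple, ∏ p ∈ A, u p = ∑ n ∈ Ple.image i, g n / n := by
      rw [Finset.sum_image hinj']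
      exact Finset.sum_congr rfl (fun A hA => (hival A (Finset.filter_subset _ _ hA)).symm)
    rw [hstep]
    apply Finset.sum_le_sum_of_subset_of_nonneg
    · intro n hn
      obtain ⟨A, hA, rfl⟩ := Finset.mem_image.mp hn
      obtain ⟨hA1, hA2⟩ := Finset.mem_filter.mp hA
      refine Finset.mem_filter.mpr ⟨Finset.mem_Icc.mpr ⟨hipos A hA1, hA2⟩, ?_⟩
      intro q hq hdvd
      have hqA : q ∈ A := (hiprime A hA1 q hq).mp hdvd
      exact hPle q (Finset.mem_powerset.mp hA1 hqA)
    · exact fun n _ _ => div_nonneg (hgnn n) (Nat.cast_nonneg n)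
  have hC1 : ∑ A ∈ Pgt, ∏ p ∈ A, u p ≤ Real.exp (-t) * ∏ p ∈ P, (1 + w p) := by
    have hterm : ∀ A ∈ Pgt, ∏ p ∈ A, u p ≤ Real.exp (-t) * ∏ p ∈ A, w p := by
      intro A hA
      obtain ⟨hA1, hA2⟩ := Finset.mem_filter.mp hA
      have hAsub : A ⊆ P := Finset.mem_powerset.mp hA1
      have hxlt : x < (i A : ℝ) := by
        have := (Nat.floor_lt hx0.le).mp (by omega : ⌊x⌋₊ < i A)
        exact this
      have hN : (i A : ℝ) = ∏ p ∈ A, (p:ℝ) := by rw [hi]; push_cast; rfl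
      have hNpos : (0:ℝ) < ∏ p ∈ A, (p:ℝ) := by
        rw [← hN]; exact_mod_cast hipos A hA1
      have h1 : (1:ℝ) ≤ ((∏ p ∈ A, (p:ℝ)) / x) ^ ε := by
        have hge : (1:ℝ) ≤ (∏ p ∈ A, (p:ℝ)) / x := by
          rw [le_div_iff₀ hx0]
          rw [← hN]
          linarith
        calc (1:ℝ) = (1:ℝ) ^ ε := (Real.one_rpow ε).symm
          _ ≤ ((∏ p ∈ A, (p:ℝ)) / x) ^ ε := Real.rpow_le_rpow zero_le_one hge hε0.le
      have h2 : ((∏ p ∈ A, (p:ℝ)) / x) ^ ε = x ^ (-ε) * ∏ p ∈ A, (p:ℝ) ^ ε := by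
        rw [Real.div_rpow hNpos.le hx0.le, Real.rpow_neg hx0.le,
          Real.finset_prod_rpow A _ (fun p hp => (hppos p (hAsub hp)).le) ε]
        ring
      have hprod_nn : (0:ℝ) ≤ ∏ p ∈ A, u p :=
        Finset.prod_nonneg (fun p hp => hu_nn p (hAsub hp))
      calc ∏ p ∈ A, u p ≤ (((∏ p ∈ A, (p:ℝ)) / x) ^ ε) * ∏ p ∈ A, u p := by
            nlinarith
        _ = x ^ (-ε) * ((∏ p ∈ A, (p:ℝ) ^ ε) * ∏ p ∈ A, u p) := by rw [h2]; ring
        _ = x ^ (-ε) * ∏ p ∈ A, w p := by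
            rw [← Finset.prod_mul_distrib]
            congr 1
            exact Finset.prod_congr rfl (fun p hp => by rw [hw, hu]; ring)
        _ = Real.exp (-t) * ∏ p ∈ A, w p := by rw [hxε]
    calc ∑ A ∈ Pgt, ∏ p ∈ A, u p ≤ ∑ A ∈ Pgt, Real.exp (-t) * ∏ p ∈ A, w p :=
          Finset.sum_le_sum hterm
      _ = Real.exp (-t) * ∑ A ∈ Pgt, ∏ p ∈ A, w p := by rw [Finset.mul_sum]
      _ ≤ Real.exp (-t) * ∑ A ∈ P.powerset, ∏ p ∈ A, w p := by
          apply mul_le_mul_of_nonneg_left ?_ (Real.exp_pos _).le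
          apply Finset.sum_le_sum_of_subset_of_nonneg (Finset.filter_subset _ _)
          intro A hA _
          exact Finset.prod_nonneg (fun p hp => hw_nn p (Finset.mem_powerset.mp hA hp))
      _ = Real.exp (-t) * ∏ p ∈ P, (1 + w p) := by rw [hBw]
  have hsplit : ∑ A ∈ Ple, ∏ p ∈ A, u p + ∑ A ∈ Pgt, ∏ p ∈ A, u p
      = ∑ A ∈ P.powerset, ∏ p ∈ A, u p := by
    rw [hPle', hPgt]
    exact Finset.sum_filter_add_sum_filter_not _ _ _
  have hfinal : Real.exp (S - 4) - Real.exp (-t) * Real.exp (S + 48) ≤ ∑ n ∈ T, g n / n := by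
    have h1 : Real.exp (S - 4) ≤ ∑ A ∈ P.powerset, ∏ p ∈ A, u p := by
      rw [hBu]; exact hD
    have h2 : Real.exp (-t) * ∏ p ∈ P, (1 + w p) ≤ Real.exp (-t) * Real.exp (S + 48) :=
      mul_le_mul_of_nonneg_left hE (Real.exp_pos _).le
    linarith [hA1, hC1, hsplit]
  have halg : Real.exp (-4) * Real.exp S * (1 - Real.exp 52 * Real.exp (-t))
      = Real.exp (S - 4) - Real.exp (-t) * Real.exp (S + 48) := by
    rw [show S - 4 = -4 + S by ring, show S + 48 = -4 + S + 52 by ring,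
      Real.exp_add, Real.exp_add, Real.exp_add]
    ring
  rw [ge_iff_le, halg]
  exact hfinal
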